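/- Theorem 4.2, part 3 (accuracy of the monotonic-valuations mechanism). Fix B > 0, ε > 0, γ > 0 and n ≥ 1, and let M = M_{B,ε} be the monotonic-valuations mechanism. Let (b,v) ∈ {0,1}^n × ℝ^n be the true types and let η = |{i : b_i = 1 and 2εv_i > B/n}| / n. Let v' ∈ ℝ^n be any vector of declared valuations satisfying v'_i = v_i for every i with 2εv_i ≤ B/n (i.e., the low-valuation players report truthfully; high-valuation players may declare arbitrarily). Then, with b̄ = (1/n)·Σ_i b_i, Pr[ M_out(b, v') ∉ ((b̄ − η − γ)n, (b̄ + γ)n) ] ≤ 2e^{−εγn}; that is, M is ([η + γ, γ], 2e^{−εγn})-accurate on (b, v'). -/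

import Mathlib

open MeasureTheory
open scoped ENNReal

noncomputable section

attribute [local instance] Classical.propDecidable

/-- Expectation of a real-valued function under a `PMF`. -/
def PMF.expect {α : Type*} [MeasurableSpace α] (p : PMF α) (f : α → ℝ) : ℝ :=
  ∫ x, f x ∂p.toMeasure

/-- Total variation (statistical) distance between two distributions:
`Δ(p,q) = sup_S |p(S) - q(S)|`. -/
def tvDist {α : Type*} (p q : PMF α) : ℝ :=
  ⨆ S : Set α, |(p.toOuterMeasure S).toReal - (q.toOuterMeasure S).toReal|

/-- A mechanism on `n` players: a randomized function producing an integer output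
(an estimate of the sum of the data bits) together with payments to the `n` players. -/
structure Mech (n : ℕ) where
  run : (Fin n → Bool) → (Fin n → ℝ) → PMF (ℤ × (Fin n → ℝ))

namespace Mech

variable {n : ℕ}

/-- The output part `M_out`. -/
def out (M : Mech n) (b : Fin n → Bool) (v : Fin n → ℝ) : PMF ℤ :=
  (M.run b v).map Prod.fst

/-- The payment part `M_pay`. -/
def payPMF (M : Mech n) (b : Fin n → Bool) (v : Fin n → ℝ) : PMF (Fin n → ℝ) :=
  (M.run b v).map Prod.snd

/-- `Pay_i(b,v)`: the expected payment to player `i`. -/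
def pay (M : Mech n) (b : Fin n → Bool) (v : Fin n → ℝ) (i : Fin n) : ℝ :=
  (M.payPMF b v).expect (fun p => p i)

/-- `M_{-i}`: the output together with the payments to all players other than `i`. -/
def minus (M : Mech n) (i : Fin n) (b : Fin n → Bool) (v : Fin n → ℝ) :
    PMF (ℤ × ({j : Fin n // j ≠ i} → ℝ)) :=
  (M.run b v).map (fun sp => (sp.1, fun j => sp.2 j.1))

end Mech

/-- The type of privacy loss functions `λ_i(b, v, v'_i, s, p_{-i})` for player `i`. -/
abbrev LossFn (n : ℕ) (i : Fin n) : Type :=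
  (Fin n → Bool) → (Fin n → ℝ) → ℝ → ℤ → ({j : Fin n // j ≠ i} → ℝ) → ℝ

/-- `Loss_i(b, v, v'_i)`: the expected privacy loss of player `i` with true types `(b,v)`
and declaration `v'_i`. -/
def lossOf {n : ℕ} (M : Mech n) {i : Fin n} (lam : LossFn n i)
    (b : Fin n → Bool) (v : Fin n → ℝ) (v'i : ℝ) : ℝ :=
  (M.run b (Function.update v i v'i)).expect
    (fun sp => lam b v v'i sp.1 (fun j => sp.2 j.1))

/-- `i`-neighbors: inputs agreeing in all coordinates `j ≠ i`. -/
def iNeighbor {n : ℕ} (i : Fin n) (x y : (Fin n → Bool) × (Fin n → ℝ)) : Prop :=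
  ∀ j, j ≠ i → x.1 j = y.1 j ∧ x.2 j = y.2 j

/-- Neighbors: `i`-neighbors for some `i`. -/
def Neighbor {n : ℕ} (x y : (Fin n → Bool) × (Fin n → ℝ)) : Prop :=
  ∃ i, iNeighbor i x y

/-- Monotonically related player types. -/
def monRelated (t t' : Bool × ℝ) : Prop :=
  (t.1 = false ∧ t'.1 = true ∧ t.2 ≤ t'.2) ∨ (t.1 = true ∧ t'.1 = false ∧ t'.2 ≤ t.2)

/-- Monotonic `i`-neighbors. -/
def monINeighbor {n : ℕ} (i : Fin n) (x y : (Fin n → Bool) × (Fin n → ℝ)) : Prop :=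
  iNeighbor i x y ∧ monRelated (x.1 i, x.2 i) (y.1 i, y.2 i)

/-- `(b,v)` is `δ`-distinguishable for player `i` with respect to `f`. -/
def distinguishable {n : ℕ} {α : Type*} (δ : ℝ)
    (f : (Fin n → Bool) → (Fin n → ℝ) → PMF α) (i : Fin n)
    (b : Fin n → Bool) (v : Fin n → ℝ) : Prop :=
  ∃ y : (Fin n → Bool) × (Fin n → ℝ), iNeighbor i (b, v) y ∧ δ ≤ tvDist (f b v) (f y.1 y.2)

/-- `(b,v)` is `δ`-monotonically distinguishable for player `i` with respect to `f`. -/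
def monDistinguishable {n : ℕ} {α : Type*} (δ : ℝ)
    (f : (Fin n → Bool) → (Fin n → ℝ) → PMF α) (i : Fin n)
    (b : Fin n → Bool) (v : Fin n → ℝ) : Prop :=
  ∃ y : (Fin n → Bool) × (Fin n → ℝ), monINeighbor i (b, v) y ∧ δ ≤ tvDist (f b v) (f y.1 y.2)

/-- `λ_i` respects indifference. -/
def respectsIndifference {n : ℕ} (M : Mech n) {i : Fin n} (lam : LossFn n i) : Prop :=
  ∀ b v, v i = 0 → ∀ v' v'', lossOf M lam b v v' = lossOf M lam b v v''

/-- `λ_i` is increasing for `δ`-distinguishability. -/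
def increasingFor {n : ℕ} (M : Mech n) {i : Fin n} (lam : LossFn n i) (δ : ℝ) : Prop :=
  ∃ T : ℝ → (Fin n → Bool) → ({j : Fin n // j ≠ i} → ℝ) → ℝ,
    ∀ ℓ, 0 < ℓ → ∀ (b : Fin n → Bool) (v : Fin n → ℝ),
      T ℓ b (fun j => v j.1) ≤ v i →
      distinguishable δ M.out i b v →
      ℓ < lossOf M lam b v (v i)

/-- `λ_i` is increasing for `δ`-monotonic distinguishability. -/
def increasingForMon {n : ℕ} (M : Mech n) {i : Fin n} (lam : LossFn n i) (δ : ℝ) : Prop :=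
  ∃ T : ℝ → (Fin n → Bool) → ({j : Fin n // j ≠ i} → ℝ) → ℝ,
    ∀ ℓ, 0 < ℓ → ∀ (b : Fin n → Bool) (v : Fin n → ℝ),
      T ℓ b (fun j => v j.1) ≤ v i →
      monDistinguishable δ M.out i b v →
      ℓ < lossOf M lam b v (v i)

/-- `M` is individually rational. -/
def indivRational {n : ℕ} (M : Mech n) (lam : ∀ i : Fin n, LossFn n i) : Prop :=
  ∀ b v i, lossOf M (lam i) b v (v i) ≤ M.pay b v i

/-- `M` is truthful for input `(b,v)` and player `i`. -/
def truthfulAt {n : ℕ} (M : Mech n) {i : Fin n} (lam : LossFn n i)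
    (b : Fin n → Bool) (v : Fin n → ℝ) : Prop :=
  ∀ v'i : ℝ,
    M.pay b (Function.update v i v'i) i - lossOf M lam b v v'i ≤
      M.pay b v i - lossOf M lam b v (v i)

/-- The average `b̄` of the data bits. -/
def bbar {n : ℕ} (b : Fin n → Bool) : ℝ := (∑ i, if b i then (1 : ℝ) else 0) / n

/-- `M` is `([a, a'], β)`-accurate on input `(b,v)`. -/
def accurate {n : ℕ} (M : Mech n) (a a' β : ℝ) (b : Fin n → Bool) (v : Fin n → ℝ) : Prop :=
  ((M.out b v).toOuterMeasure
      {s : ℤ | ¬((bbar b - a) * n < (s : ℝ) ∧ (s : ℝ) < (bbar b + a') * n)}).toReal ≤ β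

/-- `G` is the symmetric geometric distribution `Geom(ε)` on `ℤ`, with
`Pr[X = k] = (1-e^{-ε})/(1+e^{-ε}) · e^{-ε|k|}`. -/
def isGeom (ε : ℝ) (G : PMF ℤ) : Prop :=
  ∀ k : ℤ, G k =
    ENNReal.ofReal ((1 - Real.exp (-ε)) / (1 + Real.exp (-ε)) * Real.exp (-ε * |(k : ℝ)|))

/-- The monotonic-valuations mechanism `M_{B,ε}` (Algorithm 1): data bits of players with
`2εv_i > B/n` are treated as 0, the output is the resulting sum plus `Geom(ε)` noise, and
each player with `2εv_i ≤ B/n` is paid `B/n` (others are paid nothing). -/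
def monMech (n : ℕ) (B ε : ℝ) (G : PMF ℤ) : Mech n where
  run b v := G.map (fun x =>
    ((∑ i, if b i = true ∧ 2 * ε * v i ≤ B / n then (1 : ℤ) else 0) + x,
      fun i => if 2 * ε * v i ≤ B / n then B / n else 0))

/-- The modified mechanism `M'` of Theorem 4.3: identical to `M_{B,ε}` except that all
players with data bit 0 are paid `B/n`, even those with large privacy valuations. -/
def monMech' (n : ℕ) (B ε : ℝ) (G : PMF ℤ) : Mech n where
  run b v := G.map (fun x =>
    ((∑ i, if b i = true ∧ 2 * ε * v i ≤ B / n then (1 : ℤ) else 0) + x,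
      fun i => if 2 * ε * v i ≤ B / n ∨ b i = false then B / n else 0))

/-- The log-ratio of point probabilities of `M_{-i}` between `(b,v)` and the input where
player `i`'s type is replaced by `(b''_i, v''_i)`. -/
def logRatio {n : ℕ} (M : Mech n) (i : Fin n) (b : Fin n → Bool) (v : Fin n → ℝ)
    (b''i : Bool) (v''i : ℝ) (s : ℤ) (p : {j : Fin n // j ≠ i} → ℝ) : ℝ :=
  Real.log ((M.minus i b v (s, p)).toReal /
    (M.minus i (Function.update b i b''i) (Function.update v i v''i) (s, p)).toReal)

/-- `λ_i` is bounded by differential privacy for monotonic valuations. -/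
def boundedByDPMon {n : ℕ} (M : Mech n) {i : Fin n} (lam : LossFn n i) : Prop :=
  ∀ b v v'i s p,
    |lam b v v'i s p| ≤
      v i * ⨆ t : {t : Bool × ℝ // monRelated (b i, v i) t},
        logRatio M i b v t.1.1 t.1.2 s p

/-- `λ_i` respects identical output distributions. -/
def respectsIdentical {n : ℕ} (M : Mech n) {i : Fin n} (lam : LossFn n i) : Prop :=
  ∀ b v v'i, M.minus i b v = M.minus i b (Function.update v i v'i) →
    ∀ s p, lam b v v'i s p = lam b v (v i) s p

/-- `λ_i` is growing with statistical distance for monotonic neighbors. -/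
def growingMon {n : ℕ} (M : Mech n) {i : Fin n} (lam : LossFn n i) : Prop :=
  ∀ b v y, monINeighbor i (b, v) y →
    v i * tvDist (M.out b v) (M.out y.1 y.2) ≤ lossOf M lam b v (v i)


/-- Half-line tail bound for the symmetric geometric PMF. -/
lemma geom_half_aux {ε : ℝ} (hε : 0 < ε) {G : PMF ℤ}
    (hG : ∀ k : ℤ, G k = ENNReal.ofReal
      ((1 - Real.exp (-ε)) / (1 + Real.exp (-ε)) * Real.exp (-ε * |(k : ℝ)|)))
    (m : ℕ) (g : ℕ → ℤ) (hg : Function.Injective g)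
    (hnat : ∀ k, (g k).natAbs = m + k)
    (A : Set ℤ) (hA : A ⊆ Set.range g) (hmem : ∀ k, g k ∈ A) :
    G.toOuterMeasure A ≤ ENNReal.ofReal (Real.exp (-ε) ^ m) := by
  set q := Real.exp (-ε) with hqdef
  have hq0 : 0 < q := Real.exp_pos _
  have hq1 : q < 1 := by
    rw [hqdef, Real.exp_lt_one_iff]; linarith
  rw [PMF.toOuterMeasure_apply]
  have hsupp : Function.support (A.indicator (G : ℤ → ℝ≥0∞)) ⊆ Set.range g :=
    fun x hx => hA (by
      by_contra hxA
      exact hx (Set.indicator_of_notMem hxA _))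
  rw [← hg.tsum_eq hsupp]
  have hterm : ∀ k : ℕ, A.indicator (G : ℤ → ℝ≥0∞) (g k) =
      ENNReal.ofReal ((1 - q) / (1 + q) * q ^ (m + k)) := by
    intro k
    rw [Set.indicator_of_mem (hmem k), hG]
    congr 2
    have habs : |((g k : ℤ) : ℝ)| = ((m + k : ℕ) : ℝ) := by
      rw [← hnat k, Nat.cast_natAbs, Int.cast_abs]
    rw [habs, show -ε * ((m + k : ℕ) : ℝ) = ((m + k : ℕ) : ℝ) * (-ε) by ring,
      Real.exp_nat_mul]
  calc ∑' k : ℕ, A.indicator (G : ℤ → ℝ≥0∞) (g k)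
      ≤ ∑' k : ℕ, ENNReal.ofReal (1 - q) * ENNReal.ofReal (q ^ m) * ENNReal.ofReal q ^ k := by
        refine ENNReal.tsum_le_tsum fun k => ?_
        rw [hterm k, ← ENNReal.ofReal_pow hq0.le, ← ENNReal.ofReal_mul (by linarith),
          ← ENNReal.ofReal_mul (mul_nonneg (by linarith) (pow_nonneg hq0.le m))]
        refine ENNReal.ofReal_le_ofReal ?_
        rw [pow_add]
        have h1 : (1 - q) / (1 + q) ≤ 1 - q := by
          apply div_le_self (by linarith) (by linarith)
        nlinarith [mul_le_mul_of_nonneg_right h1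
          (mul_nonneg (pow_nonneg hq0.le m) (pow_nonneg hq0.le k))]
    _ = ENNReal.ofReal (1 - q) * ENNReal.ofReal (q ^ m) * ∑' k : ℕ, ENNReal.ofReal q ^ k :=
        ENNReal.tsum_mul_left
    _ = ENNReal.ofReal (1 - q) * ENNReal.ofReal (q ^ m) * (ENNReal.ofReal (1 - q))⁻¹ := by
        rw [ENNReal.tsum_geometric, ← ENNReal.ofReal_one, ← ENNReal.ofReal_sub _ hq0.le]
    _ = ENNReal.ofReal (q ^ m) := by
        rw [mul_comm (ENNReal.ofReal (1 - q)), mul_assoc,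
          ENNReal.mul_inv_cancel (by simp [ENNReal.ofReal_pos]; linarith) ENNReal.ofReal_ne_top,
          mul_one]

lemma geom_tail_aux {ε : ℝ} (hε : 0 < ε) {G : PMF ℤ}
    (hG : ∀ k : ℤ, G k = ENNReal.ofReal
      ((1 - Real.exp (-ε)) / (1 + Real.exp (-ε)) * Real.exp (-ε * |(k : ℝ)|)))
    (m : ℕ) :
    G.toOuterMeasure {x : ℤ | m ≤ x.natAbs} ≤
      ENNReal.ofReal (2 * Real.exp (-ε) ^ m) := by
  have hsub : {x : ℤ | m ≤ x.natAbs} ⊆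
      {x : ℤ | (m : ℤ) ≤ x} ∪ {x : ℤ | x ≤ -(m : ℤ)} := by
    intro x hx
    simp only [Set.mem_setOf_eq, Set.mem_union] at hx ⊢
    omega
  refine le_trans (measure_mono hsub) ?_
  refine le_trans (measure_union_le _ _) ?_
  have h1 : G.toOuterMeasure {x : ℤ | (m : ℤ) ≤ x} ≤
      ENNReal.ofReal (Real.exp (-ε) ^ m) := by
    refine geom_half_aux hε hG m (fun k => (m : ℤ) + k) (fun a b h => by simp only at h; omega)
      (fun k => by omega) _ (fun x hx => ?_) (fun k => by simp)
    · exact ⟨(x - m).toNat, by simp only [Set.mem_setOf_eq] at hx; simp only; omega⟩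
  have h2 : G.toOuterMeasure {x : ℤ | x ≤ -(m : ℤ)} ≤
      ENNReal.ofReal (Real.exp (-ε) ^ m) := by
    refine geom_half_aux hε hG m (fun k => -((m : ℤ) + k)) (fun a b h => by simp only at h; omega)
      (fun k => by omega) _ (fun x hx => ?_) (fun k => by simp)
    · exact ⟨(-x - m).toNat, by simp only [Set.mem_setOf_eq] at hx; simp only; omega⟩
  calc G.toOuterMeasure {x : ℤ | (m : ℤ) ≤ x} + G.toOuterMeasure {x : ℤ | x ≤ -(m : ℤ)}
      ≤ ENNReal.ofReal (Real.exp (-ε) ^ m) + ENNReal.ofReal (Real.exp (-ε) ^ m) :=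
        add_le_add h1 h2
    _ = ENNReal.ofReal (2 * Real.exp (-ε) ^ m) := by
        rw [← ENNReal.ofReal_add (by positivity) (by positivity)]; ring_nf

/-- **Theorem 4.2, part 3 (accuracy of the monotonic-valuations mechanism).** -/
theorem monMech_accurate (n : ℕ) (hn : 1 ≤ n) (B ε γ : ℝ)
    (hB : 0 < B) (hε : 0 < ε) (hγ : 0 < γ)
    (G : PMF ℤ) (hG : isGeom ε G)
    (b : Fin n → Bool) (v v' : Fin n → ℝ)
    (htruthful : ∀ i : Fin n, 2 * ε * v i ≤ B / n → v' i = v i) :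
    accurate (monMech n B ε G)
      ((((Finset.univ.filter
          (fun i : Fin n => b i = true ∧ B / n < 2 * ε * v i)).card : ℝ) / n) + γ)
      γ (2 * Real.exp (-(ε * γ * n))) b v' := by
  classical
  have hn0 : (0 : ℝ) < n := by exact_mod_cast Nat.pos_of_ne_zero (by omega)
  set q := Real.exp (-ε) with hq
  set m : ℕ := ⌈γ * n⌉₊ with hm
  set H : ℕ := (Finset.univ.filter
    (fun i : Fin n => b i = true ∧ B / n < 2 * ε * v i)).card with hH
  set C : ℕ := (Finset.univ.filter (fun i : Fin n => b i = true)).card with hC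
  set Sn : ℕ := (Finset.univ.filter
    (fun i : Fin n => b i = true ∧ 2 * ε * v' i ≤ B / n)).card with hSn
  have hSC : Sn ≤ C := by
    apply Finset.card_le_card
    intro i hi
    simp only [Finset.mem_filter, Finset.mem_univ, true_and] at hi ⊢; exact hi.1
  have hCS : C ≤ Sn + H := by
    have hsub : Finset.univ.filter (fun i : Fin n => b i = true) ⊆
        (Finset.univ.filter (fun i : Fin n => b i = true ∧ 2 * ε * v' i ≤ B / n)) ∪
        (Finset.univ.filter (fun i : Fin n => b i = true ∧ B / n < 2 * ε * v i)) := by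
      intro i hi
      simp only [Finset.mem_filter, Finset.mem_union, Finset.mem_univ, true_and] at hi ⊢
      by_cases h : 2 * ε * v' i ≤ B / n
      · exact Or.inl ⟨hi, h⟩
      · refine Or.inr ⟨hi, ?_⟩
        by_contra h2
        push_neg at h2
        exact h (by rw [htruthful i h2]; exact h2)
    calc C ≤ _ := Finset.card_le_card hsub
      _ ≤ Sn + H := Finset.card_union_le _ _
  have hbbar : bbar b * n = C := by
    rw [bbar, Finset.sum_boole, hC]
    exact div_mul_cancel₀ _ (ne_of_gt hn0)
  have hout : (monMech n B ε G).out b v' = G.map (fun x => (Sn : ℤ) + x) := by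
    show ((G.map _).map _) = _
    rw [PMF.map_comp]
    congr 1
    funext x
    simp only [Function.comp_apply]
    congr 1
    rw [Finset.sum_boole, hSn]
  unfold accurate
  rw [hout, PMF.toOuterMeasure_map_apply]
  refine ENNReal.toReal_le_of_le_ofReal (by positivity) ?_
  have hsub2 : (fun x : ℤ => (Sn : ℤ) + x) ⁻¹'
      {s : ℤ | ¬((bbar b - (((H : ℝ)) / n + γ)) * n < (s : ℝ) ∧
        (s : ℝ) < (bbar b + γ) * n)} ⊆ {x : ℤ | m ≤ x.natAbs} := by
    intro x hx
    simp only [Set.mem_preimage, Set.mem_setOf_eq] at hx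
    rw [Set.mem_setOf_eq, hm, Nat.ceil_le]
    have habs : ((x.natAbs : ℕ) : ℝ) = |(x : ℝ)| := by
      rw [Nat.cast_natAbs, Int.cast_abs]
    rw [habs]
    push_neg at hx
    have hxr : (((Sn : ℤ) + x : ℤ) : ℝ) = (Sn : ℝ) + (x : ℝ) := by push_cast; ring
    rw [hxr] at hx
    have hc : (C : ℝ) ≤ (Sn : ℝ) + H := by exact_mod_cast hCS
    have hsc : (Sn : ℝ) ≤ C := by exact_mod_cast hSC
    have hdm : ((H : ℝ) / n) * n = H := div_mul_cancel₀ _ (ne_of_gt hn0)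
    have hl : (bbar b - ((H : ℝ) / n + γ)) * n = (C : ℝ) - H - γ * n := by
      linear_combination hbbar - hdm
    rcases le_or_gt ((Sn : ℝ) + (x : ℝ)) ((bbar b - ((H : ℝ) / n + γ)) * n) with h | h
    · rw [hl] at h
      have hx2 : (x : ℝ) ≤ -(γ * n) := by linarith
      calc γ * n ≤ -(x : ℝ) := by linarith
        _ ≤ |(x : ℝ)| := neg_le_abs _
    · have h2 : (bbar b + γ) * n ≤ (Sn : ℝ) + (x : ℝ) := hx h
      have hu : (bbar b + γ) * n = (C : ℝ) + γ * n := by linear_combination hbbar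
      rw [hu] at h2
      calc γ * n ≤ (x : ℝ) := by linarith
        _ ≤ |(x : ℝ)| := le_abs_self _
  refine le_trans (measure_mono hsub2) (le_trans (geom_tail_aux hε hG m) ?_)
  apply ENNReal.ofReal_le_ofReal
  have hqm : q ^ m ≤ Real.exp (-(ε * γ * n)) := by
    rw [hq, ← Real.exp_nat_mul]
    apply Real.exp_le_exp.mpr
    have hceil : γ * n ≤ (m : ℝ) := by rw [hm]; exact Nat.le_ceil _
    nlinarith [hε.le]
  linarith
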